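/- Let i, j, n be positive integers and define S(i,j) = ∑_{k=1}^{n} C(k+j−2, 2j−2) · C(k+i−2, 2i−2). Then, in ℚ, (j+i−1) · S(i,j) + 2(2j+2i−1) · S(i+1,j) = 2n · (n−i+1)_{2i−1} · (n−j+1)_{2j−1} / ( (2i)! · (2j−2)! ). -/

import Mathlib

open Finset

/-- Shifted factorial (Pochhammer) `(a)_n = a(a+1)⋯(a+n-1)`. -/
def poch (a : ℚ) (n : ℕ) : ℚ := ∏ k ∈ Finset.range n, (a + k)

/-- `S(i,j) = ∑_{k=1}^{n} C(k+j-2, 2j-2) · C(k+i-2, 2i-2)`. -/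
def Ssum (n i j : ℕ) : ℚ :=
  ∑ k ∈ Finset.Icc 1 n,
    (Nat.choose (k + j - 2) (2 * j - 2) : ℚ) * (Nat.choose (k + i - 2) (2 * i - 2) : ℚ)

lemma poch_succ (x : ℚ) (t : ℕ) : poch x (t + 1) = poch x t * (x + t) := by
  simp [poch, Finset.prod_range_succ]

lemma poch_succ' (x : ℚ) (t : ℕ) : poch x (t + 1) = x * poch (x + 1) t := by
  rw [poch, Finset.prod_range_succ']
  simp only [Nat.cast_zero, add_zero, mul_comm]
  rw [poch]
  congr 1
  apply Finset.prod_congr rfl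
  intro k _
  push_cast
  ring

lemma poch_natCast (s t : ℕ) : poch (s : ℚ) t = (s.ascFactorial t : ℚ) := by
  induction t with
  | zero => simp [poch]
  | succ t ih => rw [poch_succ, ih, Nat.ascFactorial_succ]; push_cast; ring

lemma choose_poch (m a : ℕ) :
    ((Nat.choose (m + a) (2 * a) : ℚ)) * (Nat.factorial (2 * a) : ℚ)
      = poch ((m : ℚ) - a + 1) (2 * a) := by
  rcases lt_or_ge m a with h | h
  · rw [Nat.choose_eq_zero_of_lt (by omega)]
    simp only [Nat.cast_zero, zero_mul]
    rw [eq_comm, poch]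
    apply Finset.prod_eq_zero (i := a - m - 1) (by simp; omega)
    have : ((a - m - 1 : ℕ) : ℚ) = (a : ℚ) - m - 1 := by
      have h1 : a - m - 1 = a - (m + 1) := by omega
      rw [h1, Nat.cast_sub (by omega)]
      push_cast
      ring
    rw [this]; ring
  · obtain ⟨c, rfl⟩ := Nat.exists_eq_add_of_le h
    have : ((a + c : ℕ) : ℚ) - a + 1 = ((c + 1 : ℕ) : ℚ) := by push_cast; ring
    rw [this, poch_natCast, Nat.ascFactorial_eq_factorial_mul_choose]
    have : a + c + a = c + 2 * a := by ring
    rw [this]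
    push_cast
    ring

lemma aux (a b n : ℕ) :
    ((b : ℚ) + a + 1) *
        (∑ m ∈ Finset.range n,
          (Nat.choose (m + b) (2 * b) : ℚ) * (Nat.choose (m + a) (2 * a) : ℚ))
      + 2 * (2 * (b : ℚ) + 2 * a + 3) *
        (∑ m ∈ Finset.range n,
          (Nat.choose (m + b) (2 * b) : ℚ) * (Nat.choose (m + (a + 1)) (2 * (a + 1)) : ℚ))
      = 2 * (n : ℚ) * poch ((n : ℚ) - a) (2 * a + 1) * poch ((n : ℚ) - b) (2 * b + 1) /
          ((Nat.factorial (2 * (a + 1)) : ℚ) * (Nat.factorial (2 * b) : ℚ)) := by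
  induction n with
  | zero => simp
  | succ n ih =>
    rw [Finset.sum_range_succ, Finset.sum_range_succ, mul_add, mul_add]
    have key : ∀ x y : ℚ, x + y = y + x := fun x y => add_comm x y
    rw [show ((b:ℚ) + a + 1) * (∑ m ∈ Finset.range n,
          (Nat.choose (m + b) (2 * b) : ℚ) * (Nat.choose (m + a) (2 * a) : ℚ))
        + ((b:ℚ) + a + 1) * ((Nat.choose (n + b) (2 * b) : ℚ) * (Nat.choose (n + a) (2 * a) : ℚ))
        + (2 * (2 * (b : ℚ) + 2 * a + 3) *
            (∑ m ∈ Finset.range n,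
              (Nat.choose (m + b) (2 * b) : ℚ) * (Nat.choose (m + (a + 1)) (2 * (a + 1)) : ℚ))
          + 2 * (2 * (b : ℚ) + 2 * a + 3) *
            ((Nat.choose (n + b) (2 * b) : ℚ) * (Nat.choose (n + (a + 1)) (2 * (a + 1)) : ℚ)))
        = (((b : ℚ) + a + 1) *
            (∑ m ∈ Finset.range n,
              (Nat.choose (m + b) (2 * b) : ℚ) * (Nat.choose (m + a) (2 * a) : ℚ))
          + 2 * (2 * (b : ℚ) + 2 * a + 3) *
            (∑ m ∈ Finset.range n,
              (Nat.choose (m + b) (2 * b) : ℚ) * (Nat.choose (m + (a + 1)) (2 * (a + 1)) : ℚ)))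
        + (((b:ℚ) + a + 1) * ((Nat.choose (n + b) (2 * b) : ℚ) * (Nat.choose (n + a) (2 * a) : ℚ))
          + 2 * (2 * (b : ℚ) + 2 * a + 3) *
            ((Nat.choose (n + b) (2 * b) : ℚ) * (Nat.choose (n + (a + 1)) (2 * (a + 1)) : ℚ)))
        from by ring, ih]
    -- now pure algebra
    set A := poch ((n : ℚ) - a + 1) (2 * a) with hA
    set B := poch ((n : ℚ) - b + 1) (2 * b) with hB
    have hca : (Nat.choose (n + a) (2 * a) : ℚ) * (Nat.factorial (2 * a) : ℚ) = A :=
      choose_poch n a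
    have hcb : (Nat.choose (n + b) (2 * b) : ℚ) * (Nat.factorial (2 * b) : ℚ) = B :=
      choose_poch n b
    have hca' : (Nat.choose (n + (a + 1)) (2 * (a + 1)) : ℚ) * (Nat.factorial (2 * (a + 1)) : ℚ)
        = ((n : ℚ) - a) * A * ((n : ℚ) + a + 1) := by
      have := choose_poch n (a + 1)
      rw [this]
      have h1 : ((n : ℚ)) - (a + 1 : ℕ) + 1 = (n : ℚ) - a - 1 + 1 := by push_cast; ring
      have h2 : 2 * (a + 1) = (2 * a + 1) + 1 := by ring
      rw [h1, h2, poch_succ', poch_succ]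
      have h3 : (n : ℚ) - a - 1 + 1 + 1 = (n : ℚ) - a + 1 := by ring
      rw [h3, hA]
      push_cast
      ring
    have hRa1 : poch (((n : ℕ) + 1 : ℕ) - (a : ℚ)) (2 * a + 1) = A * ((n : ℚ) + a + 1) := by
      have h1 : (((n : ℕ) + 1 : ℕ) : ℚ) - a = (n : ℚ) - a + 1 := by push_cast; ring
      rw [h1, poch_succ, hA]; push_cast; ring
    have hRb1 : poch (((n : ℕ) + 1 : ℕ) - (b : ℚ)) (2 * b + 1) = B * ((n : ℚ) + b + 1) := by
      have h1 : (((n : ℕ) + 1 : ℕ) : ℚ) - b = (n : ℚ) - b + 1 := by push_cast; ring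
      rw [h1, poch_succ, hB]; push_cast; ring
    have hRa : poch ((n : ℚ) - a) (2 * a + 1) = ((n : ℚ) - a) * A := by
      rw [poch_succ', hA]
    have hRb : poch ((n : ℚ) - b) (2 * b + 1) = ((n : ℚ) - b) * B := by
      rw [poch_succ', hB]
    rw [hRa1, hRb1, hRa, hRb]
    have hfa : (Nat.factorial (2 * a) : ℚ) ≠ 0 := by positivity
    have hfb : (Nat.factorial (2 * b) : ℚ) ≠ 0 := by positivity
    have hfa1 : (Nat.factorial (2 * (a + 1)) : ℚ) ≠ 0 := by positivity
    have hfact : (Nat.factorial (2 * (a + 1)) : ℚ)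
        = (2 * a + 2) * (2 * a + 1) * (Nat.factorial (2 * a) : ℚ) := by
      have : 2 * (a + 1) = (2 * a + 1) + 1 := by ring
      rw [this, Nat.factorial_succ, Nat.factorial_succ]
      push_cast
      ring
    have hA' : (Nat.choose (n + a) (2 * a) : ℚ) = A / (Nat.factorial (2 * a) : ℚ) := by
      field_simp [← hca]
      exact hca
    have hB' : (Nat.choose (n + b) (2 * b) : ℚ) = B / (Nat.factorial (2 * b) : ℚ) := by
      field_simp [← hcb]
      exact hcb
    have hA1' : (Nat.choose (n + (a + 1)) (2 * (a + 1)) : ℚ)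
        = ((n : ℚ) - a) * A * ((n : ℚ) + a + 1) / (Nat.factorial (2 * (a + 1)) : ℚ) := by
      field_simp [← hca']
      exact hca'
    rw [hA', hB', hA1', hfact]
    push_cast
    field_simp
    ring

theorem stmt5 (i j n : ℕ) (hi : 1 ≤ i) (hj : 1 ≤ j) (hn : 1 ≤ n) :
    ((j : ℚ) + i - 1) * Ssum n i j + 2 * (2 * (j : ℚ) + 2 * i - 1) * Ssum n (i + 1) j
    = 2 * (n : ℚ) * poch ((n : ℚ) - i + 1) (2 * i - 1) * poch ((n : ℚ) - j + 1) (2 * j - 1) /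
        ((Nat.factorial (2 * i) : ℚ) * (Nat.factorial (2 * j - 2) : ℚ)) := by
  obtain ⟨a, rfl⟩ := Nat.exists_eq_add_of_le hi
  obtain ⟨b, rfl⟩ := Nat.exists_eq_add_of_le hj
  have hS1 : Ssum n (1 + a) (1 + b)
      = ∑ m ∈ Finset.range n,
          (Nat.choose (m + b) (2 * b) : ℚ) * (Nat.choose (m + a) (2 * a) : ℚ) := by
    rw [Ssum, ← Finset.Ico_add_one_right_eq_Icc, Finset.sum_Ico_eq_sum_range]
    apply Finset.sum_congr (by congr 1)
    intro m _
    rw [show 1 + m + (1 + b) - 2 = m + b from by omega,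
        show 1 + m + (1 + a) - 2 = m + a from by omega,
        show 2 * (1 + b) - 2 = 2 * b from by omega,
        show 2 * (1 + a) - 2 = 2 * a from by omega]
  have hS2 : Ssum n (1 + a + 1) (1 + b)
      = ∑ m ∈ Finset.range n,
          (Nat.choose (m + b) (2 * b) : ℚ) * (Nat.choose (m + (a + 1)) (2 * (a + 1)) : ℚ) := by
    rw [Ssum, ← Finset.Ico_add_one_right_eq_Icc, Finset.sum_Ico_eq_sum_range]
    apply Finset.sum_congr (by congr 1)
    intro m _
    rw [show 1 + m + (1 + b) - 2 = m + b from by omega,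
        show 1 + m + (1 + a + 1) - 2 = m + (a + 1) from by omega,
        show 2 * (1 + b) - 2 = 2 * b from by omega,
        show 2 * (1 + a + 1) - 2 = 2 * (a + 1) from by omega]
  have h1 : ((1 + b : ℕ) : ℚ) + ((1 + a : ℕ) : ℚ) - 1 = (b : ℚ) + a + 1 := by push_cast; ring
  have h2 : 2 * ((1 + b : ℕ) : ℚ) + 2 * ((1 + a : ℕ) : ℚ) - 1
      = 2 * (b : ℚ) + 2 * a + 3 := by push_cast; ring
  have e1 : 2 * (1 + a) - 1 = 2 * a + 1 := by omega
  have e2 : 2 * (1 + b) - 1 = 2 * b + 1 := by omega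
  have e3 : 2 * (1 + b) - 2 = 2 * b := by omega
  have e4 : 2 * (1 + a) = 2 * (a + 1) := by omega
  have e5 : ((n : ℚ)) - ((1 + a : ℕ) : ℚ) + 1 = (n : ℚ) - a := by push_cast; ring
  have e6 : ((n : ℚ)) - ((1 + b : ℕ) : ℚ) + 1 = (n : ℚ) - b := by push_cast; ring
  rw [hS1, hS2, h1, h2, e1, e2, e3, e4, e5, e6]
  exact aux a b n
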